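/- Let n ≥ 2 be an integer, δ ∈ (0,1), t > 0, and let ν be a Borel measure on [0,∞) with ν([0,u]) ≤ (e·u/(n−1))^{n−1} for all u > 0. Then ∫_0^∞ ν([0,u]) · |1 − u t / n| · t^n e^{−t u} du ≤ δ · t^n ∫_0^∞ ν([0,u]) e^{−t u} du + (1−δ)^n e^{δ n} + (1+δ)^n e^{−δ n}. -/

import Mathlib

open MeasureTheory
open scoped ENNReal

set_option maxHeartbeats 1000000 in
/-- Lemma 9.5 of the paper: for a Borel measure `ν` on `[0,∞)` with
`ν([0,u]) ≤ (e u/(n-1))^{n-1}`, for `n ≥ 2`, `δ ∈ (0,1)` and `t > 0`,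
`∫_0^∞ ν([0,u]) |1 - ut/n| t^n e^{-tu} du
  ≤ δ t^n ∫_0^∞ ν([0,u]) e^{-tu} du + (1-δ)^n e^{δn} + (1+δ)^n e^{-δn}`. -/
theorem distribution_integral_bound (n : ℕ) (hn : 2 ≤ n) (δ t : ℝ)
    (hδ : δ ∈ Set.Ioo (0 : ℝ) 1) (ht : 0 < t)
    (ν : Measure ℝ) (hNeg : ν (Set.Iio 0) = 0)
    (hbound : ∀ u : ℝ, 0 < u →
      ν (Set.Icc 0 u) ≤ ENNReal.ofReal ((Real.exp 1 * u / ((n : ℝ) - 1)) ^ (n - 1))) :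
    (∫⁻ u in Set.Ioi (0 : ℝ),
        ν (Set.Icc 0 u) * ENNReal.ofReal (|1 - u * t / n| * t ^ n * Real.exp (-t * u)))
      ≤ ENNReal.ofReal δ *
          (ENNReal.ofReal (t ^ n) *
            ∫⁻ u in Set.Ioi (0 : ℝ), ν (Set.Icc 0 u) * ENNReal.ofReal (Real.exp (-t * u)))
        + ENNReal.ofReal ((1 - δ) ^ n * Real.exp (δ * n))
        + ENNReal.ofReal ((1 + δ) ^ n * Real.exp (-δ * n)) := by
  obtain ⟨m, rfl⟩ : ∃ m, n = m + 2 := ⟨n - 2, by omega⟩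
  obtain ⟨hδ0, hδ1⟩ := hδ
  push_cast
  -- basic constants
  set M : ℝ := (m : ℝ) + 2 with hM
  have hM0 : (0 : ℝ) < M := by positivity
  have hM1 : (0 : ℝ) < (m : ℝ) + 1 := by positivity
  set c0 : ℝ := (Real.exp 1 / ((m : ℝ) + 1)) ^ (m + 1) with hc0
  have hc0pos : 0 < c0 := by positivity
  set c : ℝ := c0 * t ^ (m + 2) with hc
  have hcpos : 0 < c := by positivity
  set a : ℝ := M * (1 - δ) / t with ha
  set b : ℝ := M * (1 + δ) / t with hb
  have ha0 : 0 < a := by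
    apply div_pos _ ht
    have : (0:ℝ) < 1 - δ := by linarith
    positivity
  have hb0 : 0 < b := by
    apply div_pos _ ht
    have : (0:ℝ) < 1 + δ := by linarith
    positivity
  -- functions
  set F : ℝ → ℝ := fun u => c / M * (u ^ (m + 2) * Real.exp (-t * u)) with hF
  set f1 : ℝ → ℝ := fun u => c * u ^ (m + 1) * (1 - u * t / M) * Real.exp (-t * u) with hf1
  set f2 : ℝ → ℝ := fun u => c * u ^ (m + 1) * (u * t / M - 1) * Real.exp (-t * u) with hf2
  have hf1c : Continuous f1 := by fun_prop
  have hf2c : Continuous f2 := by fun_prop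
  have hFc : Continuous F := by fun_prop
  -- derivative
  have hderivF : ∀ u : ℝ, HasDerivAt F (f1 u) u := by
    intro u
    have h1 : HasDerivAt (fun u : ℝ => u ^ (m + 2)) ((m + 2 : ℕ) * u ^ (m + 1)) u := by
      simpa using hasDerivAt_pow (m + 2) u
    have h2 : HasDerivAt (fun u : ℝ => Real.exp (-t * u)) (Real.exp (-t * u) * (-t * 1)) u :=
      ((hasDerivAt_id u).const_mul (-t)).exp
    have h3 := ((h1.mul h2).const_mul (c / M))
    convert h3 using 1
    · rfl
    · rfl
    · rfl
    have hu : u ^ (m + 2) = u ^ (m + 1) * u := by ring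
    simp only [hf1, hu]
    push_cast
    field_simp
    ring
  -- rewritten bound
  have hbound' : ∀ u : ℝ, 0 < u →
      ν (Set.Icc 0 u) ≤ ENNReal.ofReal (c0 * u ^ (m + 1)) := by
    intro u hu
    refine (hbound u hu).trans_eq ?_
    congr 1
    have : (m + 2 - 1) = m + 1 := by omega
    rw [this, hc0, ← mul_pow]
    congr 1
    push_cast
    rw [show ((m:ℝ) + 2 - 1) = (m:ℝ) + 1 from by ring]
    ring
  -- key constant bound : c0 * M^(m+1) * exp(-M) ≤ 1
  have hkey : c0 * M ^ (m + 1) * Real.exp (-M) ≤ 1 := by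
    have h1 : Real.exp 1 * M / ((m : ℝ) + 1) ≤ Real.exp (1 + 1 / ((m : ℝ) + 1)) := by
      rw [Real.exp_add]
      have h2 : Real.exp 1 * M / ((m : ℝ) + 1) = Real.exp 1 * (1 + 1 / ((m : ℝ) + 1)) := by
        rw [hM]; field_simp; ring
      rw [h2]
      have h3 : 1 + 1 / ((m : ℝ) + 1) ≤ Real.exp (1 / ((m : ℝ) + 1)) := by
        rw [add_comm]; exact Real.add_one_le_exp _
      exact mul_le_mul_of_nonneg_left h3 (Real.exp_pos 1).le
    have h4 : c0 * M ^ (m + 1) = (Real.exp 1 * M / ((m : ℝ) + 1)) ^ (m + 1) := by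
      rw [hc0, ← mul_pow]
      congr 1
      ring
    have h5 : (Real.exp 1 * M / ((m : ℝ) + 1)) ^ (m + 1)
        ≤ (Real.exp (1 + 1 / ((m : ℝ) + 1))) ^ (m + 1) := by
      apply pow_le_pow_left₀ (by positivity) h1
    have h6 : (Real.exp (1 + 1 / ((m : ℝ) + 1))) ^ (m + 1) = Real.exp M := by
      rw [← Real.exp_nat_mul]
      congr 1
      rw [hM]
      push_cast
      field_simp
      ring
    calc c0 * M ^ (m + 1) * Real.exp (-M)
        ≤ Real.exp M * Real.exp (-M) := by
          apply mul_le_mul_of_nonneg_right _ (Real.exp_pos _).le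
          rw [h4]; rw [← h6] at *; exact h5
      _ = 1 := by rw [← Real.exp_add]; simp
  -- value of F at a and b
  have hFa : F a ≤ (1 - δ) ^ (m + 2) * Real.exp (δ * M) := by
    have hexp : Real.exp (-t * a) = Real.exp (-M) * Real.exp (δ * M) := by
      rw [← Real.exp_add]
      congr 1
      rw [ha]
      field_simp
      ring
    have hap : a ^ (m + 2) = M ^ (m + 2) * (1 - δ) ^ (m + 2) / t ^ (m + 2) := by
      rw [ha, div_pow, mul_pow]
    have hEq : F a = (c0 * M ^ (m + 1) * Real.exp (-M)) * ((1 - δ) ^ (m + 2) * Real.exp (δ * M)) := by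
      simp only [hF]
      rw [hexp, hap, hc]
      have hMne : M ≠ 0 := hM0.ne'
      have htne : t ≠ 0 := ht.ne'
      field_simp
      ring
    rw [hEq]
    have hnn : 0 ≤ (1 - δ) ^ (m + 2) * Real.exp (δ * M) := by
      have : (0:ℝ) ≤ 1 - δ := by linarith
      positivity
    calc (c0 * M ^ (m + 1) * Real.exp (-M)) * ((1 - δ) ^ (m + 2) * Real.exp (δ * M))
        ≤ 1 * ((1 - δ) ^ (m + 2) * Real.exp (δ * M)) := mul_le_mul_of_nonneg_right hkey hnn
      _ = _ := one_mul _
  have hFb : F b ≤ (1 + δ) ^ (m + 2) * Real.exp (-δ * M) := by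
    have hexp : Real.exp (-t * b) = Real.exp (-M) * Real.exp (-δ * M) := by
      rw [← Real.exp_add]
      congr 1
      rw [hb]
      field_simp
      ring
    have hbp : b ^ (m + 2) = M ^ (m + 2) * (1 + δ) ^ (m + 2) / t ^ (m + 2) := by
      rw [hb, div_pow, mul_pow]
    have hEq : F b = (c0 * M ^ (m + 1) * Real.exp (-M)) * ((1 + δ) ^ (m + 2) * Real.exp (-δ * M)) := by
      simp only [hF]
      rw [hexp, hbp, hc]
      have hMne : M ≠ 0 := hM0.ne'
      have htne : t ≠ 0 := ht.ne'
      field_simp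
      ring
    rw [hEq]
    have hnn : 0 ≤ (1 + δ) ^ (m + 2) * Real.exp (-δ * M) := by positivity
    calc (c0 * M ^ (m + 1) * Real.exp (-M)) * ((1 + δ) ^ (m + 2) * Real.exp (-δ * M))
        ≤ 1 * ((1 + δ) ^ (m + 2) * Real.exp (-δ * M)) := mul_le_mul_of_nonneg_right hkey hnn
      _ = _ := one_mul _
  -- interval integral of f1 on Ioc 0 a
  have hI1 : ∫ u in Set.Ioc 0 a, f1 u = F a := by
    rw [← intervalIntegral.integral_of_le ha0.le]
    rw [intervalIntegral.integral_eq_sub_of_hasDerivAt (fun x _ => hderivF x)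
      (hf1c.intervalIntegrable 0 a)]
    simp [hF, zero_pow]
  -- tendsto for improper integral
  have htend : Filter.Tendsto (fun u => -(F u)) Filter.atTop (nhds 0) := by
    have h0 := Real.tendsto_pow_mul_exp_neg_atTop_nhds_zero (m + 2)
    have hcomp : Filter.Tendsto (fun u : ℝ => (t * u) ^ (m + 2) * Real.exp (-(t * u)))
        Filter.atTop (nhds 0) :=
      h0.comp ((Filter.tendsto_const_mul_atTop_of_pos ht).mpr Filter.tendsto_id)
    have h1 : Filter.Tendsto (fun u : ℝ => (c / M / t ^ (m + 2)) *
        ((t * u) ^ (m + 2) * Real.exp (-(t * u)))) Filter.atTop (nhds 0) := by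
      have := hcomp.const_mul (c / M / t ^ (m + 2))
      simpa using this
    have h2 : (fun u : ℝ => (c / M / t ^ (m + 2)) * ((t * u) ^ (m + 2) * Real.exp (-(t * u))))
        = F := by
      funext u
      simp only [hF, mul_pow]
      have htne : t ≠ 0 := ht.ne'
      rw [neg_mul]
      field_simp
    rw [h2] at h1
    simpa using h1.neg
  have hderivNeg : ∀ x ∈ Set.Ioi b, HasDerivAt (fun u => -(F u)) (f2 x) x := by
    intro x _
    have : f2 x = -(f1 x) := by simp only [hf1, hf2]; ring
    rw [this]
    exact (hderivF x).neg
  have hpos2 : ∀ x ∈ Set.Ioi b, 0 ≤ f2 x := by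
    intro x hx
    have hxb : b < x := hx
    have hx0 : 0 < x := lt_trans hb0 hxb
    have h1 : 1 + δ ≤ x * t / M := by
      rw [le_div_iff₀ hM0]
      have := (div_lt_iff₀ ht).mp hxb
      nlinarith
    have h2 : 0 ≤ x * t / M - 1 := by linarith
    have := Real.exp_pos (-t * x)
    simp only [hf2]
    positivity
  have hcontF : ContinuousWithinAt (fun u => -(F u)) (Set.Ici b) b :=
    (hFc.neg).continuousWithinAt
  have hI2 : ∫ u in Set.Ioi b, f2 u = F b := by
    have := integral_Ioi_of_hasDerivAt_of_nonneg hcontF hderivNeg hpos2 htend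
    simpa using this
  have hInt2 : IntegrableOn f2 (Set.Ioi b) :=
    integrableOn_Ioi_deriv_of_nonneg hcontF hderivNeg hpos2 htend
  -- measurability facts
  have hmν : Measurable fun u : ℝ => ν (Set.Icc 0 u) :=
    Monotone.measurable (fun u v huv => measure_mono (Set.Icc_subset_Icc_right huv))
  have hmexp : Measurable fun u : ℝ => ENNReal.ofReal (Real.exp (-t * u)) :=
    (Real.continuous_exp.comp (continuous_const.mul continuous_id)).measurable.ennreal_ofReal
  have hmeas : Measurable fun u : ℝ => ν (Set.Icc 0 u) * ENNReal.ofReal (Real.exp (-t * u)) :=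
    hmν.mul hmexp
  -- the three comparison functions
  set G1 : ℝ → ℝ≥0∞ := fun u => ν (Set.Icc 0 u) * ENNReal.ofReal (δ * t ^ (m + 2) * Real.exp (-t * u)) with hG1
  set G2 : ℝ → ℝ≥0∞ := (Set.Ioc 0 a).indicator fun u => ENNReal.ofReal (f1 u) with hG2
  set G3 : ℝ → ℝ≥0∞ := (Set.Ici b).indicator fun u => ENNReal.ofReal (f2 u) with hG3
  have hG2m : Measurable G2 :=
    (hf1c.measurable.ennreal_ofReal).indicator measurableSet_Ioc
  have hG3m : Measurable G3 :=
    (hf2c.measurable.ennreal_ofReal).indicator measurableSet_Ici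
  -- pointwise bound
  have hpt : ∀ u ∈ Set.Ioi (0:ℝ),
      ν (Set.Icc 0 u) * ENNReal.ofReal (|1 - u * t / M| * t ^ (m + 2) * Real.exp (-t * u))
        ≤ G1 u + G2 u + G3 u := by
    intro u hu
    have hu0 : (0:ℝ) < u := hu
    rcases le_or_gt |1 - u * t / M| δ with h | h
    · -- good region
      have h1 : ν (Set.Icc 0 u) * ENNReal.ofReal (|1 - u * t / M| * t ^ (m + 2) * Real.exp (-t * u))
          ≤ G1 u := by
        apply mul_le_mul_right
        apply ENNReal.ofReal_le_ofReal
        have := Real.exp_pos (-t * u)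
        have htp : (0:ℝ) < t ^ (m + 2) := by positivity
        exact mul_le_mul_of_nonneg_right (mul_le_mul_of_nonneg_right h htp.le) this.le
      exact h1.trans (le_add_right (le_add_right le_rfl))
    · rcases lt_abs.mp h with h' | h'
      · -- 1 - ut/M > δ : small u region
        have hua : u ≤ a := by
          rw [ha, le_div_iff₀ ht]
          have h4 := (div_lt_iff₀ hM0).mp (by linarith : u * t / M < 1 - δ)
          linarith
      -- |1 - ut/M| = 1 - ut/M
        have habs : |1 - u * t / M| = 1 - u * t / M := abs_of_pos (by linarith [hδ0])
        have hmem : u ∈ Set.Ioc 0 a := ⟨hu0, hua⟩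
        have h1 : ν (Set.Icc 0 u) * ENNReal.ofReal (|1 - u * t / M| * t ^ (m + 2) * Real.exp (-t * u))
            ≤ G2 u := by
          rw [hG2, Set.indicator_of_mem hmem]
          calc ν (Set.Icc 0 u) * ENNReal.ofReal (|1 - u * t / M| * t ^ (m + 2) * Real.exp (-t * u))
              ≤ ENNReal.ofReal (c0 * u ^ (m + 1)) *
                ENNReal.ofReal (|1 - u * t / M| * t ^ (m + 2) * Real.exp (-t * u)) :=
                mul_le_mul_left (hbound' u hu0) _
            _ = ENNReal.ofReal (f1 u) := by
                rw [← ENNReal.ofReal_mul (by positivity)]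
                congr 1
                rw [habs]
                simp only [hf1, hc]
                ring
        calc ν (Set.Icc 0 u) * ENNReal.ofReal (|1 - u * t / M| * t ^ (m + 2) * Real.exp (-t * u))
            ≤ G2 u := h1
          _ ≤ G1 u + G2 u := le_add_self
          _ ≤ G1 u + G2 u + G3 u := le_add_right le_rfl
      · -- ut/M - 1 > δ : large u region
        have h'' : δ < u * t / M - 1 := by linarith
        have hub : b ≤ u := by
          rw [hb, div_le_iff₀ ht]
          have h3 : 1 + δ < u * t / M := by linarith
          have h4 := (lt_div_iff₀ hM0).mp h3
          linarith
        have habs : |1 - u * t / M| = u * t / M - 1 := by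
          rw [abs_of_neg (by linarith : 1 - u * t / M < 0)]; ring
        have hmem : u ∈ Set.Ici b := hub
        have h1 : ν (Set.Icc 0 u) * ENNReal.ofReal (|1 - u * t / M| * t ^ (m + 2) * Real.exp (-t * u))
            ≤ G3 u := by
          rw [hG3, Set.indicator_of_mem hmem]
          calc ν (Set.Icc 0 u) * ENNReal.ofReal (|1 - u * t / M| * t ^ (m + 2) * Real.exp (-t * u))
              ≤ ENNReal.ofReal (c0 * u ^ (m + 1)) *
                ENNReal.ofReal (|1 - u * t / M| * t ^ (m + 2) * Real.exp (-t * u)) :=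
                mul_le_mul_left (hbound' u hu0) _
            _ = ENNReal.ofReal (f2 u) := by
                rw [← ENNReal.ofReal_mul (by positivity)]
                congr 1
                rw [habs]
                simp only [hf2, hc]
                ring
        exact h1.trans (le_add_self)
  -- bounds for the three integrals
  have hIG1 : (∫⁻ u in Set.Ioi (0:ℝ), G1 u)
      = ENNReal.ofReal δ * (ENNReal.ofReal (t ^ (m + 2)) *
        ∫⁻ u in Set.Ioi (0:ℝ), ν (Set.Icc 0 u) * ENNReal.ofReal (Real.exp (-t * u))) := by
    have heq : ∀ u : ℝ, G1 u = (ENNReal.ofReal δ * ENNReal.ofReal (t ^ (m + 2))) *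
        (ν (Set.Icc 0 u) * ENNReal.ofReal (Real.exp (-t * u))) := by
      intro u
      simp only [hG1]
      rw [ENNReal.ofReal_mul (by positivity : (0:ℝ) ≤ δ * t ^ (m + 2)),
        ENNReal.ofReal_mul hδ0.le]
      ring
    rw [lintegral_congr heq, lintegral_const_mul _ hmeas, mul_assoc]
  have hIG2 : (∫⁻ u in Set.Ioi (0:ℝ), G2 u)
      ≤ ENNReal.ofReal ((1 - δ) ^ (m + 2) * Real.exp (δ * M)) := by
    rw [hG2, lintegral_indicator measurableSet_Ioc,
      Measure.restrict_restrict measurableSet_Ioc,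
      Set.inter_eq_self_of_subset_left Set.Ioc_subset_Ioi_self]
    have hint1 : IntegrableOn f1 (Set.Ioc 0 a) := hf1c.integrableOn_Ioc
    have hnn1 : 0 ≤ᵐ[volume.restrict (Set.Ioc 0 a)] f1 := by
      filter_upwards [ae_restrict_mem measurableSet_Ioc] with u hu
      have hu0 : 0 < u := hu.1
      have hua : u * t ≤ M * (1 - δ) := (le_div_iff₀ ht).mp hu.2
      have h2 : u * t / M ≤ 1 - δ := by
        rw [div_le_iff₀ hM0]
        calc u * t ≤ M * (1 - δ) := hua
          _ = (1 - δ) * M := mul_comm _ _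
      have h3 : 0 ≤ 1 - u * t / M := by linarith
      have := Real.exp_pos (-t * u)
      simp only [hf1]
      positivity
    rw [← ofReal_integral_eq_lintegral_ofReal hint1 hnn1]
    apply ENNReal.ofReal_le_ofReal
    rw [hI1]
    exact hFa
  have hIG3 : (∫⁻ u in Set.Ioi (0:ℝ), G3 u)
      ≤ ENNReal.ofReal ((1 + δ) ^ (m + 2) * Real.exp (-δ * M)) := by
    have hsub : Set.Ici b ⊆ Set.Ioi 0 := fun x hx => lt_of_lt_of_le hb0 hx
    rw [hG3, lintegral_indicator measurableSet_Ici,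
      Measure.restrict_restrict measurableSet_Ici,
      Set.inter_eq_self_of_subset_left hsub,
      ← Measure.restrict_congr_set (Ioi_ae_eq_Ici (μ := volume) (a := b))]
    have hnn2 : 0 ≤ᵐ[volume.restrict (Set.Ioi b)] f2 := by
      filter_upwards [ae_restrict_mem measurableSet_Ioi] with u hu
      exact hpos2 u hu
    rw [← ofReal_integral_eq_lintegral_ofReal hInt2 hnn2]
    apply ENNReal.ofReal_le_ofReal
    rw [hI2]
    exact hFb
  -- assemble
  calc (∫⁻ u in Set.Ioi (0 : ℝ),
        ν (Set.Icc 0 u) * ENNReal.ofReal (|1 - u * t / M| * t ^ (m + 2) * Real.exp (-t * u)))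
      ≤ ∫⁻ u in Set.Ioi (0:ℝ), (G1 u + G2 u + G3 u) :=
        setLIntegral_mono' measurableSet_Ioi hpt
    _ = (∫⁻ u in Set.Ioi (0:ℝ), G1 u) + (∫⁻ u in Set.Ioi (0:ℝ), G2 u)
        + (∫⁻ u in Set.Ioi (0:ℝ), G3 u) := by
        rw [lintegral_add_right _ hG3m, lintegral_add_right _ hG2m]
    _ ≤ _ := by
        rw [hIG1]
        exact add_le_add (add_le_add le_rfl hIG2) hIG3
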